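/- The Bessel sequence {g_n} is stable if and only if the sequence {e_n} is stable and ⟨e_n, e_{n+1}⟩ ≠ 0 for all n ≥ 0. -/

import Mathlib

open scoped ComplexInnerProductSpace

section KaczmarzAux

variable {H : Type*} [NormedAddCommGroup H] [InnerProductSpace ℂ H]

/-- The Kaczmarz residual operator: `kS e n = (I - P_{n-1}) ⋯ (I - P_0)`. -/
noncomputable def kS (e : ℕ → H) : ℕ → H → H
  | 0, h => h
  | n + 1, h => kS e n h - ⟪e n, kS e n h⟫ • e n

@[simp] lemma kS_zero (e : ℕ → H) (h : H) : kS e 0 h = h := rfl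

lemma kS_succ (e : ℕ → H) (n : ℕ) (h : H) :
    kS e (n + 1) h = kS e n h - ⟪e n, kS e n h⟫ • e n := rfl

@[simp] lemma kS_zero_vec (e : ℕ → H) (n : ℕ) : kS e n (0 : H) = 0 := by
  induction n with
  | zero => rfl
  | succ n ih => simp [kS_succ, ih]

lemma kS_sub (e : ℕ → H) (n : ℕ) (x y : H) :
    kS e n (x - y) = kS e n x - kS e n y := by
  induction n with
  | zero => rfl
  | succ n ih =>
    simp only [kS_succ, ih, inner_sub_right, sub_smul]
    abel

lemma kS_smul (e : ℕ → H) (n : ℕ) (c : ℂ) (x : H) :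
    kS e n (c • x) = c • kS e n x := by
  induction n with
  | zero => rfl
  | succ n ih =>
    simp only [kS_succ, ih, inner_smul_right, smul_sub, smul_smul]

lemma inner_self_one {x : H} (hx : ‖x‖ = 1) : ⟪x, x⟫ = 1 := by
  rw [inner_self_eq_norm_sq_to_K, hx]; norm_num

lemma inner_kS_succ_self (e : ℕ → H) (n : ℕ) (hn : ‖e n‖ = 1) (h : H) :
    ⟪e n, kS e (n + 1) h⟫ = 0 := by
  simp [kS_succ, inner_sub_right, inner_smul_right, inner_self_one hn, hn]

/-- Unrolled formula for inner products against `kS`. -/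
lemma kS_inner_unroll (e : ℕ → H) (n : ℕ) (x h : H) :
    ⟪x, kS e n h⟫ = ⟪x, h⟫ - ∑ i ∈ Finset.range n, ⟪e i, kS e i h⟫ * ⟪x, e i⟫ := by
  induction n with
  | zero => simp
  | succ n ih =>
    rw [kS_succ, inner_sub_right, inner_smul_right, ih, Finset.sum_range_succ]
    ring

/-- The key bridge: `⟪g n, h⟫ = ⟪e n, kS e n h⟫`. -/
lemma inner_g_eq (e g : ℕ → H) (hg0 : g 0 = e 0)
    (hg : ∀ n, 0 < n → g n = e n - ∑ i ∈ Finset.range n, ⟪e i, e n⟫ • g i) :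
    ∀ n (h : H), ⟪g n, h⟫ = ⟪e n, kS e n h⟫ := by
  intro n
  induction n using Nat.strong_induction_on with
  | _ n ih =>
    intro h
    rcases Nat.eq_zero_or_pos n with rfl | hn
    · simp [hg0]
    · rw [hg n hn, inner_sub_left, sum_inner, kS_inner_unroll]
      congr 1
      refine Finset.sum_congr rfl ?_
      intro i hi
      rw [Finset.mem_range] at hi
      rw [inner_smul_left, ih i hi h, ← inner_conj_symm (e n) (e i)]
      exact mul_comm _ _

/-- `kS e (n+1)` kills `e 0`. -/
lemma kS_e0 (e : ℕ → H) (he0 : ‖e 0‖ = 1) (n : ℕ) : kS e (n + 1) (e 0) = 0 := by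
  induction n with
  | zero => simp [kS_succ, inner_self_one he0, he0]
  | succ n ih => rw [kS_succ, ih]; simp

/-- Propagation: once the residual is orthogonal to all later `e m`, it stays constant. -/
lemma kS_eventually_const (e : ℕ → H) (N : ℕ) (x : H)
    (hx : ∀ m, N ≤ m → ⟪e m, kS e N x⟫ = 0) :
    ∀ m, N ≤ m → kS e m x = kS e N x := by
  intro m hm
  induction m with
  | zero => simpa using (Nat.le_zero.mp hm) ▸ rfl
  | succ m ih =>
    rcases Nat.lt_or_ge N (m + 1) with hlt | hge
    · have hNm : N ≤ m := Nat.lt_succ_iff.mp hlt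
      have h1 := ih hNm
      rw [kS_succ, h1, hx m hNm, zero_smul, sub_zero]
    · exact le_antisymm hm hge ▸ rfl

/-- Surjectivity: if consecutive inner products below `n` are nonzero, then
`kS e (n+1)` attains every vector orthogonal to `e n`. -/
lemma kS_surj (e : ℕ → H) (he : ∀ n, ‖e n‖ = 1) :
    ∀ n, (∀ i, i < n → ⟪e i, e (i + 1)⟫ ≠ 0) →
      ∀ y : H, ⟪e n, y⟫ = 0 → ∃ x, kS e (n + 1) x = y := by
  intro n
  induction n with
  | zero =>
    intro _ y hy
    exact ⟨y, by simp [kS_succ, hy]⟩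
  | succ n ih =>
    intro hne y hy
    set t : ℂ := -⟪e n, y⟫ / ⟪e n, e (n + 1)⟫ with ht
    have hnz : ⟪e n, e (n + 1)⟫ ≠ 0 := hne n (Nat.lt_succ_self n)
    have hz : ⟪e n, y + t • e (n + 1)⟫ = 0 := by
      rw [inner_add_right, inner_smul_right, ht]
      field_simp
      ring
    obtain ⟨x, hx⟩ := ih (fun i hi => hne i (hi.trans (Nat.lt_succ_self n))) _ hz
    refine ⟨x, ?_⟩
    rw [kS_succ, hx, inner_add_right, inner_smul_right, hy,
      inner_self_one (he (n + 1))]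
    simp

/-- Kernel: if consecutive inner products below `n` are nonzero, then
the kernel of `kS e (n+1)` is spanned by `e 0`. -/
lemma kS_ker (e : ℕ → H) (he : ∀ n, ‖e n‖ = 1) :
    ∀ n, (∀ i, i < n → ⟪e i, e (i + 1)⟫ ≠ 0) →
      ∀ h : H, kS e (n + 1) h = 0 → h = ⟪e 0, h⟫ • e 0 := by
  intro n
  induction n with
  | zero =>
    intro _ h hh
    rw [kS_succ, kS_zero] at hh
    exact sub_eq_zero.mp hh
  | succ n ih =>
    intro hne h hh
    have hc : ⟪e n, kS e (n + 1) h⟫ = 0 := inner_kS_succ_self e n (he n) h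
    rw [kS_succ] at hh
    have h1 : kS e (n + 1) h = ⟪e (n + 1), kS e (n + 1) h⟫ • e (n + 1) :=
      sub_eq_zero.mp hh
    have h2 : ⟪e (n + 1), kS e (n + 1) h⟫ * ⟪e n, e (n + 1)⟫ = 0 := by
      rw [← inner_smul_right, ← h1]; exact hc
    have h3 : ⟪e (n + 1), kS e (n + 1) h⟫ = 0 :=
      (mul_eq_zero.mp h2).resolve_right (hne n (Nat.lt_succ_self n))
    have h4 : kS e (n + 1) h = 0 := by rw [h1, h3, zero_smul]
    exact ih (fun i hi => hne i (hi.trans (Nat.lt_succ_self n))) h h4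

/-- Membership in the orthogonal complement of a span. -/
lemma mem_orthogonal_span_iff {s : Set H} {h : H} :
    h ∈ (Submodule.span ℂ s)ᗮ ↔ ∀ v ∈ s, ⟪v, h⟫ = 0 := by
  rw [Submodule.mem_orthogonal]
  constructor
  · exact fun hh v hv => hh v (Submodule.subset_span hv)
  · intro hh u hu
    induction hu using Submodule.span_induction with
    | mem v hv => exact hh v hv
    | zero => simp
    | add x y _ _ hx hy => rw [inner_add_left, hx, hy, add_zero]
    | smul c x _ hx => rw [inner_smul_left, hx, mul_zero]

end KaczmarzAux

theorem kaczmarz_stability_iff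
    {H : Type*} [NormedAddCommGroup H] [InnerProductSpace ℂ H] [CompleteSpace H]
    (e g : ℕ → H) (he : ∀ n, ‖e n‖ = 1)
    (hg0 : g 0 = e 0)
    (hg : ∀ n, 0 < n → g n = e n - ∑ i ∈ Finset.range n, ⟪e i, e n⟫ • g i) :
    (∀ N : ℕ,
        (Submodule.span ℂ (insert (g 0) (g '' {n | N ≤ n}))).topologicalClosure = ⊤) ↔
      ((∀ N : ℕ, (Submodule.span ℂ (e '' {n | N ≤ n})).topologicalClosure = ⊤) ∧
        ∀ n : ℕ, ⟪e n, e (n + 1)⟫ ≠ 0) := by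
  have hbridge := inner_g_eq e g hg0 hg
  -- characterization of density of a span via orthogonality
  have hdense : ∀ s : Set H,
      (Submodule.span ℂ s).topologicalClosure = ⊤ ↔
        ∀ h : H, (∀ v ∈ s, ⟪v, h⟫ = 0) → h = 0 := by
    intro s
    rw [Submodule.topologicalClosure_eq_top_iff, Submodule.eq_bot_iff]
    constructor
    · intro hh h hv; exact hh h (mem_orthogonal_span_iff.mpr hv)
    · intro hh h hv; exact hh h (mem_orthogonal_span_iff.mp hv)
  constructor
  · intro hGstable
    -- first: all consecutive inner products are nonzero
    have hne : ∀ n : ℕ, ⟪e n, e (n + 1)⟫ ≠ 0 := by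
      by_contra hcon
      push_neg at hcon
      classical
      have h0 : ⟪e (Nat.find hcon), e (Nat.find hcon + 1)⟫ = 0 := Nat.find_spec hcon
      set n := Nat.find hcon with hn
      have hbelow : ∀ i, i < n → ⟪e i, e (i + 1)⟫ ≠ 0 := fun i hi => Nat.find_min hcon hi
      obtain ⟨v, hv⟩ := kS_surj e he n hbelow (e (n + 1)) h0
      set v' := v - ⟪e 0, v⟫ • e 0 with hv'
      have hv'1 : kS e (n + 1) v' = e (n + 1) := by
        rw [hv', kS_sub, kS_smul, kS_e0 e (he 0), smul_zero, sub_zero, hv]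
      have hv'2 : kS e (n + 2) v' = 0 := by
        rw [kS_succ, hv'1, inner_self_one (he (n + 1)), one_smul, sub_self]
      have hv'const : ∀ m, n + 2 ≤ m → kS e m v' = 0 := by
        intro m hm
        rw [kS_eventually_const e (n + 2) v' (by intro k hk; rw [hv'2, inner_zero_right]) m hm,
          hv'2]
      have hz : v' = 0 := by
        apply (hdense _).mp (hGstable (n + 2)) v'
        rintro w (rfl | ⟨m, hm, rfl⟩)
        · rw [hg0, hv', inner_sub_right, inner_smul_right, inner_self_one (he 0), mul_one,
            sub_self]
        · rw [hbridge m v', hv'const m hm, inner_zero_right]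
      rw [hz, kS_zero_vec] at hv'1
      have h1 := he (n + 1)
      rw [← hv'1, norm_zero] at h1
      norm_num at h1
    refine ⟨?_, hne⟩
    intro N
    rw [hdense]
    intro h hv
    have hvN : ∀ m, N ≤ m → ⟪e m, h⟫ = 0 := fun m hm => hv (e m) ⟨m, hm, rfl⟩
    obtain ⟨v, hv1⟩ := kS_surj e he N (fun i _ => hne i) h (hvN N le_rfl)
    set v' := v - ⟪e 0, v⟫ • e 0 with hv'
    have hv'1 : kS e (N + 1) v' = h := by
      rw [hv', kS_sub, kS_smul, kS_e0 e (he 0), smul_zero, sub_zero, hv1]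
    have hv'const : ∀ m, N + 1 ≤ m → kS e m v' = h := by
      intro m hm
      rw [kS_eventually_const e (N + 1) v'
        (fun k hk => by rw [hv'1]; exact hvN k (Nat.le_of_succ_le hk)) m hm, hv'1]
    have hz : v' = 0 := by
      apply (hdense _).mp (hGstable (N + 1)) v'
      rintro w (rfl | ⟨m, hm, rfl⟩)
      · rw [hg0, hv', inner_sub_right, inner_smul_right, inner_self_one (he 0), mul_one,
          sub_self]
      · rw [hbridge m v', hv'const m hm]
        exact hvN m (Nat.le_of_succ_le hm)
    rw [hz, kS_zero_vec] at hv'1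
    exact hv'1.symm
  · rintro ⟨hEstable, hne⟩ N
    rw [hdense]
    intro h hv
    have hv0 : ⟪e 0, h⟫ = 0 := by
      have := hv (g 0) (Set.mem_insert _ _)
      rwa [hg0] at this
    have hvN : ∀ m, N ≤ m → ⟪e m, kS e m h⟫ = 0 := by
      intro m hm
      have := hv (g m) (Set.mem_insert_of_mem _ ⟨m, hm, rfl⟩)
      rwa [hbridge m h] at this
    -- the residual is eventually constant
    have hconst : ∀ m, N ≤ m → kS e m h = kS e N h := by
      intro m hm
      induction m with
      | zero => rw [Nat.le_zero.mp hm]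
      | succ m ih =>
        rcases Nat.lt_or_ge N (m + 1) with hlt | hge
        · have hNm : N ≤ m := Nat.lt_succ_iff.mp hlt
          rw [kS_succ, ih hNm, ← ih hNm, hvN m hNm, zero_smul, ih hNm, sub_zero]
        · rw [le_antisymm hm hge]
    have hperp : ∀ m, N ≤ m → ⟪e m, kS e N h⟫ = 0 := by
      intro m hm
      rw [← hconst m hm]
      exact hvN m hm
    have hKN : kS e N h = 0 := by
      have := (hdense (e '' {n | N ≤ n})).mp (hEstable N) (kS e N h)
      apply this
      rintro v ⟨m, hm, rfl⟩
      exact hperp m hm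
    rcases Nat.eq_zero_or_pos N with rfl | hN
    · simpa using hKN
    · obtain ⟨K, rfl⟩ : ∃ K, N = K + 1 := ⟨N - 1, (Nat.succ_pred_eq_of_pos hN).symm⟩
      rw [kS_ker e he K (fun i _ => hne i) h hKN, hv0, zero_smul]
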